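/- Let (Λ, 𝓑_Λ) and (𝓓, 𝓑_𝓓) be measurable spaces, Q : Λ → 𝓓 measurable, μ a probability measure on Λ, and let (κ_q)_{q∈𝓓} be a Markov kernel from 𝓓 to Λ that disintegrates μ over Q, i.e., μ(A) = ∫_𝓓 κ_q(A) d(Q_*μ)(q) for all A ∈ 𝓑_Λ, and κ_q(Λ ∖ Q⁻¹({q})) = 0 for Q_*μ-almost every q (assuming singletons {q} are measurable). Let g : 𝓓 → [0,∞) be measurable with ∫_Λ g(Q(λ)) dμ(λ) = 1, and define the probability measure ν(A) = ∫_A g(Q(λ)) dμ(λ). Then Q_*ν has density g with respect to Q_*μ, and the same kernel disintegrates ν over Q: ν(A) = ∫_𝓓 κ_q(A) d(Q_*ν)(q) for all A ∈ 𝓑_Λ. In other words, the updated measure has the same family of conditional probability measures on the fibers of Q as the initial measure. -/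

import Mathlib

open MeasureTheory ProbabilityTheory
open scoped ENNReal

theorem stmt_12 {Λ D : Type*} [MeasurableSpace Λ] [MeasurableSpace D]
    [MeasurableSingletonClass D]
    (Q : Λ → D) (hQ : Measurable Q)
    (μ : Measure Λ) [IsProbabilityMeasure μ]
    (κ : Kernel D Λ) [IsMarkovKernel κ]
    (hdis : ∀ A : Set Λ, MeasurableSet A → μ A = ∫⁻ q, κ q A ∂(μ.map Q))
    (hfib : ∀ᵐ q ∂(μ.map Q), κ q ((Q ⁻¹' {q})ᶜ) = 0)
    (g : D → ℝ≥0∞) (hg : Measurable g)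
    (hint : ∫⁻ x, g (Q x) ∂μ = 1)
    (ν : Measure Λ) (hν : ∀ A : Set Λ, MeasurableSet A → ν A = ∫⁻ x in A, g (Q x) ∂μ) :
    ν.map Q = (μ.map Q).withDensity g ∧
      ∀ A : Set Λ, MeasurableSet A → ν A = ∫⁻ q, κ q A ∂(ν.map Q) := by
  -- ν is withDensity
  have hνw : ν = μ.withDensity (fun x => g (Q x)) := by
    ext A hA
    rw [hν A hA, withDensity_apply _ hA]
  have hmap : ν.map Q = (μ.map Q).withDensity g := by
    ext B hB
    rw [Measure.map_apply (by fun_prop) hB, hν _ (hQ hB), withDensity_apply _ hB,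
      ← setLIntegral_map hB hg hQ]
  refine ⟨hmap, fun A hA => ?_⟩
  -- μ as bind
  have hbind : μ = (μ.map Q).bind κ := by
    ext B hB
    rw [hdis B hB, Measure.bind_apply hB κ.measurable.aemeasurable]
  have key : ∀ᵐ q ∂(μ.map Q), ∫⁻ x in A, g (Q x) ∂(κ q) = g q * κ q A := by
    filter_upwards [hfib] with q hq
    have hae : ∀ᵐ x ∂(κ q), Q x = q := by
      rw [ae_iff]
      refine measure_mono_null ?_ hq
      intro x hx
      simpa using hx
    calc ∫⁻ x in A, g (Q x) ∂(κ q) = ∫⁻ x in A, g q ∂(κ q) := by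
          refine lintegral_congr_ae ?_
          filter_upwards [ae_restrict_of_ae hae] with x hx
          rw [hx]
      _ = g q * κ q A := by simp [Measure.restrict_apply_univ]
  calc ν A = ∫⁻ x in A, g (Q x) ∂μ := hν A hA
    _ = ∫⁻ x, A.indicator (fun x => g (Q x)) x ∂μ := (lintegral_indicator hA _).symm
    _ = ∫⁻ q, ∫⁻ x, A.indicator (fun x => g (Q x)) x ∂(κ q) ∂(μ.map Q) := by
        conv_lhs => rw [hbind]
        exact Measure.lintegral_bind κ.measurable.aemeasurable (((hg.comp hQ).indicator hA).aemeasurable)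
    _ = ∫⁻ q, ∫⁻ x in A, g (Q x) ∂(κ q) ∂(μ.map Q) := by
        refine lintegral_congr fun q => lintegral_indicator hA _
    _ = ∫⁻ q, g q * κ q A ∂(μ.map Q) := lintegral_congr_ae key
    _ = ∫⁻ q, κ q A ∂((μ.map Q).withDensity g) := by
        rw [lintegral_withDensity_eq_lintegral_mul _ hg (κ.measurable_coe hA)]
        rfl
    _ = ∫⁻ q, κ q A ∂(ν.map Q) := by rw [hmap]
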